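/- Let G be a connected graph of order n containing two non-adjacent vertices x and y, each of degree at least 3, with |N(x) ∩ N(y)| ≤ 1. Then γ_{StR}(G) ≤ n − 2. -/

import Mathlib

namespace SimpleGraph

variable {V : Type*}

/-- The degree of a vertex (cardinality of its open neighborhood). -/
noncomputable def deg (G : SimpleGraph V) (v : V) : ℕ := (G.neighborSet v).ncard

/-- Maximum degree. -/
noncomputable def maxDeg [Fintype V] (G : SimpleGraph V) : ℕ :=
  Finset.univ.sup fun v => G.deg v

/-- A strong Roman dominating function: `f : V → {0,1,...,⌈Δ/2⌉+1}` such that every vertex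
with value 0 has a neighbor `w` with `f w ≥ 2` and `f w ≥ 1 + ⌈|N(w) ∩ B₀|/2⌉`. -/
def IsStRDF [Fintype V] (G : SimpleGraph V) (f : V → ℕ) : Prop :=
  (∀ v, f v ≤ (G.maxDeg + 1) / 2 + 1) ∧
  ∀ v, f v = 0 → ∃ w, G.Adj v w ∧ 2 ≤ f w ∧
    1 + ((G.neighborSet w ∩ {u | f u = 0}).ncard + 1) / 2 ≤ f w

/-- The strong Roman domination number. -/
noncomputable def gammaStR [Fintype V] (G : SimpleGraph V) : ℕ :=
  sInf {k | ∃ f, G.IsStRDF f ∧ ∑ v, f v = k}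

/-- A Roman dominating function. -/
def IsRDF (G : SimpleGraph V) (f : V → ℕ) : Prop :=
  (∀ v, f v ≤ 2) ∧ ∀ v, f v = 0 → ∃ w, G.Adj v w ∧ f w = 2

/-- The Roman domination number. -/
noncomputable def gammaR [Fintype V] (G : SimpleGraph V) : ℕ :=
  sInf {k | ∃ f, G.IsRDF f ∧ ∑ v, f v = k}

/-- A dominating set. -/
def IsDomSet (G : SimpleGraph V) (D : Set V) : Prop :=
  ∀ v ∉ D, ∃ w ∈ D, G.Adj v w

/-- The domination number. -/
noncomputable def gammaDom [Fintype V] (G : SimpleGraph V) : ℕ :=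
  sInf {k | ∃ D : Set V, G.IsDomSet D ∧ D.ncard = k}

end SimpleGraph

/-- If a connected graph `G` of order `n` has two non-adjacent vertices `x`, `y` of degree
at least 3 with `|N(x) ∩ N(y)| ≤ 1`, then `γ_{StR}(G) ≤ n − 2`. -/
theorem stmt13 {V : Type*} [Fintype V] (G : SimpleGraph V) (hc : G.Connected)
    (x y : V) (hne : x ≠ y) (hxy : ¬ G.Adj x y) (hx : 3 ≤ G.deg x) (hy : 3 ≤ G.deg y)
    (hN : (G.neighborSet x ∩ G.neighborSet y).ncard ≤ 1) :
    G.gammaStR ≤ Fintype.card V - 2 := by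
  classical
  -- extract two private neighbors of x and of y
  have hNyx : (G.neighborSet y ∩ G.neighborSet x).ncard ≤ 1 := by
    rwa [Set.inter_comm]
  have hsplitx := Set.ncard_inter_add_ncard_diff_eq_ncard (G.neighborSet x) (G.neighborSet y)
    (Set.toFinite _)
  have hsplity := Set.ncard_inter_add_ncard_diff_eq_ncard (G.neighborSet y) (G.neighborSet x)
    (Set.toFinite _)
  have h2x : 1 < (G.neighborSet x \ G.neighborSet y).ncard := by
    have hx' : 3 ≤ (G.neighborSet x).ncard := hx
    omega
  have h2y : 1 < (G.neighborSet y \ G.neighborSet x).ncard := by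
    have hy' : 3 ≤ (G.neighborSet y).ncard := hy
    omega
  obtain ⟨x₁, x₂, hx1, hx2, hx12⟩ := (Set.one_lt_ncard_iff (Set.toFinite _)).1 h2x
  obtain ⟨y₁, y₂, hy1, hy2, hy12⟩ := (Set.one_lt_ncard_iff (Set.toFinite _)).1 h2y
  -- basic adjacency facts
  have ax1 : G.Adj x x₁ := hx1.1
  have ax2 : G.Adj x x₂ := hx2.1
  have ay1 : G.Adj y y₁ := hy1.1
  have ay2 : G.Adj y y₂ := hy2.1
  -- distinctness facts
  have hx1x : x₁ ≠ x := ax1.ne'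
  have hx2x : x₂ ≠ x := ax2.ne'
  have hy1y : y₁ ≠ y := ay1.ne'
  have hy2y : y₂ ≠ y := ay2.ne'
  have hx1y : x₁ ≠ y := fun h => hxy (h ▸ ax1)
  have hx2y : x₂ ≠ y := fun h => hxy (h ▸ ax2)
  have hy1x : y₁ ≠ x := fun h => hxy (G.adj_symm (h ▸ ay1))
  have hy2x : y₂ ≠ x := fun h => hxy (G.adj_symm (h ▸ ay2))
  have hx1y1 : x₁ ≠ y₁ := fun h => hy1.2 (h ▸ hx1.1)
  have hx1y2 : x₁ ≠ y₂ := fun h => hy2.2 (h ▸ hx1.1)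
  have hx2y1 : x₂ ≠ y₁ := fun h => hy1.2 (h ▸ hx2.1)
  have hx2y2 : x₂ ≠ y₂ := fun h => hy2.2 (h ▸ hx2.1)
  -- the strong Roman dominating function
  set f : V → ℕ := fun v =>
    if v = x ∨ v = y then 2
    else if v = x₁ ∨ v = x₂ ∨ v = y₁ ∨ v = y₂ then 0 else 1 with hf
  have fx : f x = 2 := by simp [hf]
  have fy : f y = 2 := by simp [hf]
  have fle : ∀ v, f v ≤ 2 := by
    intro v; simp only [hf]; split_ifs <;> omega
  have hzero : ∀ v, f v = 0 → v = x₁ ∨ v = x₂ ∨ v = y₁ ∨ v = y₂ := by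
    intro v h
    simp only [hf] at h
    split_ifs at h with h1 h2 <;> first | exact h2 | omega
  -- max degree at least 3
  have hmax : 3 ≤ G.maxDeg := le_trans hx (Finset.le_sup (Finset.mem_univ x))
  -- counting bounds for witnesses
  have hcx : (G.neighborSet x ∩ {u | f u = 0}).ncard ≤ 2 := by
    have hsub : G.neighborSet x ∩ {u | f u = 0} ⊆ ({x₁, x₂} : Set V) := by
      rintro u ⟨hu1, hu2⟩
      rcases hzero u hu2 with h | h | h | h
      · exact Or.inl h
      · exact Or.inr h
      · exact absurd (h ▸ hu1) hy1.2
      · exact absurd (h ▸ hu1) hy2.2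
    refine (Set.ncard_le_ncard hsub (Set.toFinite _)).trans ?_
    refine (Set.ncard_insert_le _ _).trans ?_
    simp
  have hcy : (G.neighborSet y ∩ {u | f u = 0}).ncard ≤ 2 := by
    have hsub : G.neighborSet y ∩ {u | f u = 0} ⊆ ({y₁, y₂} : Set V) := by
      rintro u ⟨hu1, hu2⟩
      rcases hzero u hu2 with h | h | h | h
      · exact absurd (h ▸ hu1) hx1.2
      · exact absurd (h ▸ hu1) hx2.2
      · exact Or.inl h
      · exact Or.inr h
    refine (Set.ncard_le_ncard hsub (Set.toFinite _)).trans ?_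
    refine (Set.ncard_insert_le _ _).trans ?_
    simp
  -- f is a strong Roman dominating function
  have hStRDF : G.IsStRDF f := by
    constructor
    · intro v
      have := fle v
      omega
    · intro v hv
      rcases hzero v hv with h | h | h | h
      · exact ⟨x, by subst h; exact G.adj_symm ax1, by omega, by omega⟩
      · exact ⟨x, by subst h; exact G.adj_symm ax2, by omega, by omega⟩
      · exact ⟨y, by subst h; exact G.adj_symm ay1, by omega, by omega⟩
      · exact ⟨y, by subst h; exact G.adj_symm ay2, by omega, by omega⟩
  -- the weight of f
  set S : Finset V := {x, y, x₁, x₂, y₁, y₂} with hS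
  have hScard : S.card = 6 := by
    simp only [hS]
    rw [Finset.card_insert_of_notMem (by simp [hne, hx1x.symm, hx2x.symm, hy1x.symm, hy2x.symm]),
      Finset.card_insert_of_notMem (by simp [hx1y.symm, hx2y.symm, hy1y.symm, hy2y.symm]),
      Finset.card_insert_of_notMem (by simp [hx12, hx1y1, hx1y2]),
      Finset.card_insert_of_notMem (by simp [hx2y1, hx2y2]),
      Finset.card_insert_of_notMem (by simp [hy12])]
    simp
  have hSsum : ∑ v ∈ S, f v = 4 := by
    simp only [hS]
    rw [Finset.sum_insert (by simp [hne, hx1x.symm, hx2x.symm, hy1x.symm, hy2x.symm]),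
      Finset.sum_insert (by simp [hx1y.symm, hx2y.symm, hy1y.symm, hy2y.symm]),
      Finset.sum_insert (by simp [hx12, hx1y1, hx1y2]),
      Finset.sum_insert (by simp [hx2y1, hx2y2]),
      Finset.sum_insert (by simp [hy12]), Finset.sum_singleton]
    have f1 : f x₁ = 0 := by simp [hf, hx1x, hx1y]
    have f2 : f x₂ = 0 := by simp [hf, hx2x, hx2y]
    have f3 : f y₁ = 0 := by simp [hf, hy1x, hy1y]
    have f4 : f y₂ = 0 := by simp [hf, hy2x, hy2y]
    rw [fx, fy, f1, f2, f3, f4]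
    norm_num
  have hSle : S.card ≤ Fintype.card V := Finset.card_le_univ S
  have hOut : ∀ v ∈ Finset.univ \ S, f v = 1 := by
    intro v hv
    simp only [hS, Finset.mem_sdiff, Finset.mem_insert, Finset.mem_singleton] at hv
    push_neg at hv
    obtain ⟨-, h1, h2, h3, h4, h5, h6⟩ := hv
    simp [hf, h1, h2, h3, h4, h5, h6]
  have hsum : ∑ v, f v = Fintype.card V - 2 := by
    rw [← Finset.sum_sdiff (Finset.subset_univ S), hSsum,
      Finset.sum_congr rfl hOut, Finset.sum_const, smul_eq_mul, mul_one,
      Finset.card_sdiff_of_subset (Finset.subset_univ S), Finset.card_univ, hScard]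
    omega
  exact Nat.sInf_le ⟨f, hStRDF, hsum⟩
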